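/- arXiv:2210.15171 — 2 statements merged into one kernel-verified Lean document; each statement's English description precedes it below -/
import Mathlib

section
/- Let A be a nonsingular M-tensor (A = sI − B with B ≥ 0 entrywise and s > ρ(B)) and b ≥ 0 in R^n. Then the tensor equation A x^{m-1} = b has a minimal nonnegative solution, i.e., a nonnegative solution x* such that x* ≤ y for every nonnegative solution y. -/
open Finset Filter

noncomputable section

/-- Action of an order-(p+1) tensor (p trailing indices):
`(A x^{p})_i = ∑ a_{i i₂ … i_{p+1}} x_{i₂} ⋯ x_{i_{p+1}}`. -/
def tapp (p n : ℕ) (A : Fin n → (Fin p → Fin n) → ℝ) (x : Fin n → ℝ) : Fin n → ℝ :=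
  fun i => ∑ js : Fin p → Fin n, A i js * ∏ j, x (js j)

/-- A `Z`-tensor: all off-diagonal entries are nonpositive. -/
def IsZTensor (p n : ℕ) (A : Fin n → (Fin p → Fin n) → ℝ) : Prop :=
  ∀ i js, (∃ j, js j ≠ i) → A i js ≤ 0

/-- The identity tensor. -/
def identT (p n : ℕ) : Fin n → (Fin p → Fin n) → ℝ :=
  fun i js => if ∀ j, js j = i then 1 else 0

/-- Spectral radius of a tensor: sup of moduli of (real) eigenvalues. -/
def tensorSpecRad (p n : ℕ) (B : Fin n → (Fin p → Fin n) → ℝ) : ℝ :=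
  sSup {r : ℝ | ∃ lam : ℝ, ∃ x : Fin n → ℝ, x ≠ 0 ∧
    (∀ i, tapp p n B x i = lam * x i ^ p) ∧ r = |lam|}

/-- A nonsingular M-tensor: `A = s I − B` with `B ≥ 0` and `s > ρ(B)`. -/
def IsMTensor (p n : ℕ) (A : Fin n → (Fin p → Fin n) → ℝ) : Prop :=
  ∃ s : ℝ, ∃ B : Fin n → (Fin p → Fin n) → ℝ,
    (∀ i js, 0 ≤ B i js) ∧ tensorSpecRad p n B < s ∧
    ∀ i js, A i js = s * identT p n i js - B i js

/-- The diagonal-part tensor of `A`. -/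
def diagT (p n : ℕ) (A : Fin n → (Fin p → Fin n) → ℝ) : Fin n → (Fin p → Fin n) → ℝ :=
  fun i js => if ∀ j, js j = i then A i (fun _ => i) else 0

/-- The majorization matrix of `A`: `M_{ij} = a_{i j … j}`. -/
def majMatrix (p n : ℕ) (A : Fin n → (Fin p → Fin n) → ℝ) : Matrix (Fin n) (Fin n) ℝ :=
  fun i j => A i (fun _ => j)

/-- The "mixed index" part `N = M_tensor − A`: zero on constant trailing tuples,
`−A` elsewhere. -/
def NPart (p n : ℕ) (A : Fin n → (Fin p → Fin n) → ℝ) : Fin n → (Fin p → Fin n) → ℝ :=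
  fun i js => if ∀ j' j'', js j' = js j'' then 0 else -A i js

/-- A nonsingular M-matrix: a Z-matrix with `M y > 0` for some `y > 0`. -/
def IsMMatrix (n : ℕ) (P : Matrix (Fin n) (Fin n) ℝ) : Prop :=
  (∀ i j, i ≠ j → P i j ≤ 0) ∧ ∃ y : Fin n → ℝ, (∀ i, 0 < y i) ∧ ∀ i, 0 < P.mulVec y i

/-- Spectral radius of a real matrix (via its complex spectrum). -/
def matSpecRad (n : ℕ) (J : Matrix (Fin n) (Fin n) ℝ) : ℝ :=
  sSup {r : ℝ | ∃ μ ∈ spectrum ℂ (J.map (Complex.ofReal ·)), r = ‖μ‖}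

/-- Irreducibility of a matrix. -/
def MatIrreducible (n : ℕ) (J : Matrix (Fin n) (Fin n) ℝ) : Prop :=
  ∀ S : Finset (Fin n), S.Nonempty → S ≠ Finset.univ → ∃ i ∈ S, ∃ j, j ∉ S ∧ J i j ≠ 0

variable {p n : ℕ}



-- sum over all tuples of products = (sum)^p
lemma sum_prod_eq (p n : ℕ) (y : Fin n → ℝ) :
    ∑ js : Fin p → Fin n, ∏ j, y (js j) = (∑ i, y i) ^ p := by
  exact (Fintype.sum_pow y p).symm

lemma identT_apply (p n : ℕ) (x : Fin n → ℝ) (i : Fin n) :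
    ∑ js : Fin p → Fin n, identT p n i js * ∏ j, x (js j) = x i ^ p := by
  rw [Finset.sum_eq_single (fun _ => i)]
  · simp [identT]
  · intro js _ hne
    have : ¬ ∀ j, js j = i := by
      intro h; exact hne (funext h)
    simp [identT, this]
  · intro h; exact absurd (Finset.mem_univ _) h



lemma tapp_nonneg {B : Fin n → (Fin p → Fin n) → ℝ} (hB : ∀ i js, 0 ≤ B i js)
    {x : Fin n → ℝ} (hx : ∀ i, 0 ≤ x i) (i : Fin n) : 0 ≤ tapp p n B x i :=
  Finset.sum_nonneg fun js _ => mul_nonneg (hB i js) (Finset.prod_nonneg fun j _ => hx (js j))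

lemma tapp_mono {B : Fin n → (Fin p → Fin n) → ℝ} (hB : ∀ i js, 0 ≤ B i js)
    {x y : Fin n → ℝ} (hx : ∀ i, 0 ≤ x i) (hxy : ∀ i, x i ≤ y i) (i : Fin n) :
    tapp p n B x i ≤ tapp p n B y i := by
  refine Finset.sum_le_sum fun js _ => ?_
  refine mul_le_mul_of_nonneg_left ?_ (hB i js)
  exact Finset.prod_le_prod (fun j _ => hx (js j)) (fun j _ => hxy (js j))

lemma tapp_continuous (B : Fin n → (Fin p → Fin n) → ℝ) (i : Fin n) :
    Continuous fun x : Fin n → ℝ => tapp p n B x i := by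
  refine continuous_finset_sum _ fun js _ => ?_
  exact continuous_const.mul (continuous_finset_prod _ fun j _ => continuous_apply (js j))

-- root helpers
lemma rt_pow {u : ℝ} (hp : p ≠ 0) (hu : 0 ≤ u) : (u ^ (1/(p:ℝ))) ^ p = u := by
  rw [← Real.rpow_natCast (u ^ (1/(p:ℝ))) p, ← Real.rpow_mul hu]
  rw [one_div_mul_cancel (by exact_mod_cast hp), Real.rpow_one]

lemma rt_nonneg {u : ℝ} (hu : 0 ≤ u) : 0 ≤ u ^ (1/(p:ℝ)) := Real.rpow_nonneg hu _

lemma rt_mono {u v : ℝ} (hu : 0 ≤ u) (huv : u ≤ v) :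
    u ^ (1/(p:ℝ)) ≤ v ^ (1/(p:ℝ)) :=
  Real.rpow_le_rpow hu huv (by positivity)

lemma pow_rt {u : ℝ} (hp : p ≠ 0) (hu : 0 ≤ u) : (u ^ p) ^ (1/(p:ℝ)) = u := by
  rw [← Real.rpow_natCast u p, ← Real.rpow_mul hu, mul_one_div_cancel (by exact_mod_cast hp),
    Real.rpow_one]



lemma tapp_smul (C : Fin n → (Fin p → Fin n) → ℝ) (a : ℝ) (x : Fin n → ℝ) (i : Fin n) :
    tapp p n C (fun j => a * x j) i = a ^ p * tapp p n C x i := by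
  unfold tapp
  rw [Finset.mul_sum]
  refine Finset.sum_congr rfl fun js _ => ?_
  rw [Finset.prod_mul_distrib, Finset.prod_const, Finset.card_univ, Fintype.card_fin]
  ring

lemma tapp_pos {C : Fin n → (Fin p → Fin n) → ℝ} (hC : ∀ i js, 0 < C i js)
    {y : Fin n → ℝ} (hy : ∀ i, 0 ≤ y i) (hsum : ∑ i, y i = 1) (i : Fin n) :
    0 < tapp p n C y i := by
  have hex : ∃ i1 : Fin n, 0 < y i1 := by
    by_contra h
    push_neg at h
    have : ∑ i, y i = 0 := le_antisymm (Finset.sum_nonpos fun i _ => h i)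
      (Finset.sum_nonneg fun i _ => hy i)
    rw [hsum] at this; norm_num at this
  obtain ⟨i1, hi1⟩ := hex
  refine Finset.sum_pos' (fun js _ => mul_nonneg (hC i js).le
    (Finset.prod_nonneg fun j _ => hy (js j))) ⟨fun _ => i1, Finset.mem_univ _, ?_⟩
  refine mul_pos (hC i _) (Finset.prod_pos fun j _ => hi1)

/-- Bound for "sub-eigenvalues" on the simplex. -/
lemma subeigen_bound (hn : 0 < n) {C : Fin n → (Fin p → Fin n) → ℝ}
    (hC : ∀ i js, 0 ≤ C i js) {t : ℝ} {y : Fin n → ℝ} (hy : ∀ i, 0 ≤ y i)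
    (hsum : ∑ i, y i = 1) (hle : ∀ i, t * y i ^ p ≤ tapp p n C y i) :
    t ≤ ∑ i, ∑ js, C i js := by
  have : Nonempty (Fin n) := ⟨⟨0, hn⟩⟩
  obtain ⟨i0, -, hmax⟩ := Finset.exists_max_image Finset.univ y ⟨⟨0, hn⟩, Finset.mem_univ _⟩
  have hpos : 0 < y i0 := by
    by_contra h
    push_neg at h
    have h0 : ∀ i, y i = 0 := fun i => le_antisymm (le_trans (hmax i (Finset.mem_univ _)) h) (hy i)
    simp [h0] at hsum
  have h1 : tapp p n C y i0 ≤ (∑ js, C i0 js) * y i0 ^ p := by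
    rw [Finset.sum_mul]
    refine Finset.sum_le_sum fun js _ => ?_
    refine mul_le_mul_of_nonneg_left ?_ (hC i0 js)
    calc ∏ j, y (js j) ≤ ∏ _j : Fin p, y i0 :=
          Finset.prod_le_prod (fun j _ => hy (js j)) (fun j _ => hmax (js j) (Finset.mem_univ _))
      _ = y i0 ^ p := by rw [Finset.prod_const, Finset.card_univ, Fintype.card_fin]
  have h2 : (∑ js, C i0 js) ≤ ∑ i, ∑ js, C i js :=
    Finset.single_le_sum (fun i _ => Finset.sum_nonneg fun js _ => hC i js) (Finset.mem_univ i0)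
  have h3 : t * y i0 ^ p ≤ (∑ i, ∑ js, C i js) * y i0 ^ p :=
    le_trans (hle i0) (le_trans h1 (mul_le_mul_of_nonneg_right h2 (by positivity)))
  exact le_of_mul_le_mul_right h3 (by positivity)

/-- Perron: positive tensors have a positive eigenpair. -/
lemma perron (hp : p ≠ 0) (hn : 0 < n) {C : Fin n → (Fin p → Fin n) → ℝ}
    (hC : ∀ i js, 0 < C i js) :
    ∃ lam : ℝ, ∃ y : Fin n → ℝ, 0 < lam ∧ (∀ i, 0 < y i) ∧ (∑ i, y i = 1) ∧
      (∀ i, tapp p n C y i = lam * y i ^ p) := by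
  classical
  set R : ℝ := ∑ i, ∑ js, C i js with hR
  set K : Set (ℝ × (Fin n → ℝ)) := {q | q.1 ∈ Set.Icc 0 (R+1) ∧ (∀ i, 0 ≤ q.2 i) ∧
    (∑ i, q.2 i) = 1 ∧ ∀ i, q.1 * q.2 i ^ p ≤ tapp p n C q.2 i} with hK
  -- compactness
  have hKsub : K ⊆ (Set.Icc 0 (R+1)) ×ˢ (Set.pi Set.univ fun _ : Fin n => Set.Icc (0:ℝ) 1) := by
    rintro ⟨t, y⟩ ⟨ht, hy, hsum, -⟩
    refine ⟨ht, fun i _ => ⟨hy i, ?_⟩⟩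
    calc y i ≤ ∑ j, y j := Finset.single_le_sum (fun j _ => hy j) (Finset.mem_univ i)
      _ = 1 := hsum
  have hKclosed : IsClosed K := by
    have h1 : IsClosed {q : ℝ × (Fin n → ℝ) | q.1 ∈ Set.Icc 0 (R+1)} :=
      (isClosed_Icc).preimage continuous_fst
    have h2 : IsClosed {q : ℝ × (Fin n → ℝ) | ∀ i, 0 ≤ q.2 i} := by
      rw [Set.setOf_forall]
      exact isClosed_iInter fun i =>
        isClosed_le continuous_const ((continuous_apply i).comp continuous_snd)
    have h3 : IsClosed {q : ℝ × (Fin n → ℝ) | (∑ i, q.2 i) = 1} :=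
      isClosed_eq (continuous_finset_sum _ fun i _ => (continuous_apply i).comp continuous_snd) continuous_const
    have h4 : IsClosed {q : ℝ × (Fin n → ℝ) | ∀ i, q.1 * q.2 i ^ p ≤ tapp p n C q.2 i} := by
      rw [Set.setOf_forall]
      refine isClosed_iInter fun i => isClosed_le (continuous_fst.mul (((continuous_apply i).comp continuous_snd).pow p)) ?_
      exact (tapp_continuous C i).comp continuous_snd
    exact h1.inter (h2.inter (h3.inter h4))
  have hRnn : 0 ≤ R := Finset.sum_nonneg fun i _ => Finset.sum_nonneg fun js _ => (hC i js).le
  have hKcpt : IsCompact K :=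
    IsCompact.of_isClosed_subset
      ((isCompact_Icc).prod (isCompact_univ_pi fun _ => isCompact_Icc)) hKclosed hKsub
  have hnR : (n:ℝ) ≠ 0 := Nat.cast_ne_zero.mpr hn.ne'
  have hKne : K.Nonempty := by
    refine ⟨(0, fun _ => (n:ℝ)⁻¹), ⟨le_refl 0, by linarith⟩, fun i => by positivity, ?_, ?_⟩
    · rw [Finset.sum_const, Finset.card_univ, Fintype.card_fin, nsmul_eq_mul,
        mul_inv_cancel₀ hnR]
    · intro i
      rw [zero_mul]
      exact tapp_nonneg (fun i js => (hC i js).le) (fun _ => by positivity) i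
  obtain ⟨⟨lam, y⟩, hmem, hmax⟩ := hKcpt.exists_isMaxOn hKne continuous_fst.continuousOn
  obtain ⟨hlamIcc, hy0, hysum, hsub⟩ := hmem
  have heig : ∀ i, tapp p n C y i = lam * y i ^ p := by
    by_contra hcon
    push_neg at hcon
    obtain ⟨i0, hi0⟩ := hcon
    have hlt : lam * y i0 ^ p < tapp p n C y i0 :=
      lt_of_le_of_ne (hsub i0) fun h => hi0 h.symm
    have hcont : Tendsto (fun d : ℝ => lam * (y i0 + d) ^ p) (nhdsWithin 0 (Set.Ioi 0))
        (nhds (lam * y i0 ^ p)) := by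
      have hco : Continuous fun d : ℝ => lam * (y i0 + d) ^ p :=
        continuous_const.mul ((continuous_const.add continuous_id).pow p)
      have := (hco.tendsto 0).mono_left (nhdsWithin_le_nhds (s := Set.Ioi 0))
      simpa using this
    have hev : ∀ᶠ d in nhdsWithin 0 (Set.Ioi 0),
        lam * (y i0 + d) ^ p < tapp p n C y i0 := hcont.eventually_lt_const hlt
    obtain ⟨d, hdlt, hdpos⟩ := (hev.and self_mem_nhdsWithin).exists
    set y' : Fin n → ℝ := fun j => y j + if j = i0 then d else 0 with hy'def
    have hy'0 : ∀ j, 0 ≤ y' j := fun j =>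
      add_nonneg (hy0 j) (by split_ifs <;> simp [hdpos.le])
    have hyy' : ∀ j, y j ≤ y' j := fun j =>
      le_add_of_nonneg_right (by split_ifs <;> simp [hdpos.le])
    have hy'i0 : y' i0 = y i0 + d := by simp [hy'def]
    have hstrict : ∀ j, tapp p n C y j < tapp p n C y' j := by
      intro j
      refine Finset.sum_lt_sum (fun js _ => mul_le_mul_of_nonneg_left
        (Finset.prod_le_prod (fun k _ => hy0 _) (fun k _ => hyy' _)) (hC j js).le)
        ⟨fun _ => i0, Finset.mem_univ _, ?_⟩
      refine mul_lt_mul_of_pos_left ?_ (hC j _)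
      have hlt2 : y i0 < y' i0 := by rw [hy'i0]; linarith
      calc ∏ _k : Fin p, y i0 = y i0 ^ p := by
            rw [Finset.prod_const, Finset.card_univ, Fintype.card_fin]
        _ < y' i0 ^ p := pow_lt_pow_left₀ hlt2 (hy0 i0) hp
        _ = ∏ _k : Fin p, y' i0 := by
            rw [Finset.prod_const, Finset.card_univ, Fintype.card_fin]
    have hallstrict : ∀ j, lam * y' j ^ p < tapp p n C y' j := by
      intro j
      by_cases hj : j = i0
      · subst hj
        rw [hy'i0]
        exact lt_trans hdlt (hstrict _)
      · have hyj : y' j = y j := by simp [hy'def, hj]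
        rw [hyj]
        exact lt_of_le_of_lt (hsub j) (hstrict j)
    have hne' : (Finset.univ : Finset (Fin n)).Nonempty := ⟨i0, Finset.mem_univ _⟩
    set g := Finset.univ.inf' hne' (fun j => tapp p n C y' j - lam * y' j ^ p) with hgdef
    have hg : 0 < g := (Finset.lt_inf'_iff hne').mpr fun j _ => sub_pos.mpr (hallstrict j)
    have hsumy' : 0 ≤ ∑ j, y' j := Finset.sum_nonneg fun j _ => hy'0 j
    set Y := (∑ j, y' j) ^ p + 1 with hYdef
    have hY : 0 < Y := add_pos_of_nonneg_of_pos (pow_nonneg hsumy' p) one_pos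
    set η := g / Y with hetadef
    have hη : 0 < η := div_pos hg hY
    have hkey : ∀ j, (lam + η) * y' j ^ p ≤ tapp p n C y' j := by
      intro j
      have h5 : y' j ^ p ≤ Y := by
        have hle1 : y' j ≤ ∑ k, y' k :=
          Finset.single_le_sum (fun k _ => hy'0 k) (Finset.mem_univ j)
        calc y' j ^ p ≤ (∑ k, y' k) ^ p := pow_le_pow_left₀ (hy'0 j) hle1 p
          _ ≤ Y := le_add_of_nonneg_right zero_le_one
      have h6 : η * y' j ^ p ≤ g := by
        calc η * y' j ^ p ≤ η * Y := mul_le_mul_of_nonneg_left h5 hη.le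
          _ = g := by rw [hetadef]; field_simp
      have h7 : g ≤ tapp p n C y' j - lam * y' j ^ p := Finset.inf'_le _ (Finset.mem_univ j)
      nlinarith
    set c := ∑ j, y' j with hcdef
    have hcval : c = 1 + d := by
      rw [hcdef, hy'def]
      rw [Finset.sum_add_distrib, hysum, Finset.sum_ite_eq' Finset.univ i0 (fun _ => d)]
      simp
    have hc : 0 < c := by rw [hcval]; linarith
    set y'' : Fin n → ℝ := fun j => c⁻¹ * y' j with hy''def
    have h0'' : ∀ j, 0 ≤ y'' j := fun j => mul_nonneg (inv_nonneg.mpr hc.le) (hy'0 j)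
    have hsum'' : ∑ j, y'' j = 1 := by
      rw [hy''def, ← Finset.mul_sum, ← hcdef, inv_mul_cancel₀ hc.ne']
    have hcon'' : ∀ i, (lam + η) * y'' i ^ p ≤ tapp p n C y'' i := by
      intro i
      rw [hy''def, tapp_smul, mul_pow]
      calc (lam + η) * ((c⁻¹) ^ p * y' i ^ p) = (c⁻¹) ^ p * ((lam + η) * y' i ^ p) := by ring
        _ ≤ (c⁻¹) ^ p * tapp p n C y' i :=
            mul_le_mul_of_nonneg_left (hkey i) (by positivity)
    have hboundK : lam + η ≤ R :=
      subeigen_bound hn (fun i js => (hC i js).le) h0'' hsum'' hcon''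
    have hmemK : ((lam + η), y'') ∈ K :=
      ⟨⟨add_nonneg hlamIcc.1 hη.le, show lam + η ≤ R + 1 by linarith⟩, h0'', hsum'', hcon''⟩
    have hfin : lam + η ≤ lam := isMaxOn_iff.mp hmax _ hmemK
    linarith
  have hposall : ∀ i, 0 < lam * y i ^ p := fun i => (heig i) ▸ tapp_pos hC hy0 hysum i
  have hy_pos : ∀ i, 0 < y i := by
    intro i
    rcases lt_or_eq_of_le (show (0:ℝ) ≤ y i from hy0 i) with h | h
    · exact h
    · exfalso
      have := hposall i
      rw [← h, zero_pow hp, mul_zero] at this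
      exact lt_irrefl _ this
  have hlam : 0 < lam := by
    have h1 := hposall ⟨0, hn⟩
    have h2 := pow_pos (hy_pos ⟨0, hn⟩) p
    nlinarith
  exact ⟨lam, y, hlam, hy_pos, hysum, heig⟩
lemma eigen_bound {B : Fin n → (Fin p → Fin n) → ℝ} (hB : ∀ i js, 0 ≤ B i js)
    {lam : ℝ} {x : Fin n → ℝ} (hx : x ≠ 0) (heig : ∀ i, tapp p n B x i = lam * x i ^ p) :
    |lam| ≤ ∑ i, ∑ js, B i js := by
  classical
  have hne : (Finset.univ : Finset (Fin n)).Nonempty := by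
    rcases Function.ne_iff.mp hx with ⟨i, -⟩
    exact ⟨i, Finset.mem_univ _⟩
  obtain ⟨i0, -, hmax⟩ := Finset.exists_max_image Finset.univ (fun i => |x i|) hne
  have hx0 : 0 < |x i0| := by
    rcases Function.ne_iff.mp hx with ⟨i, hi⟩
    exact lt_of_lt_of_le (abs_pos.mpr hi) (hmax i (Finset.mem_univ _))
  have h1 : |lam| * |x i0| ^ p ≤ (∑ js, B i0 js) * |x i0| ^ p := by
    have e1 : |lam| * |x i0| ^ p = |tapp p n B x i0| := by
      rw [heig i0, abs_mul, abs_pow]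
    rw [e1]
    calc |tapp p n B x i0| ≤ ∑ js, |B i0 js * ∏ j, x (js j)| := Finset.abs_sum_le_sum_abs _ _
      _ ≤ ∑ js, B i0 js * |x i0| ^ p := by
          refine Finset.sum_le_sum fun js _ => ?_
          rw [abs_mul, abs_of_nonneg (hB i0 js)]
          refine mul_le_mul_of_nonneg_left ?_ (hB i0 js)
          rw [abs_prod]
          calc ∏ j, |x (js j)| ≤ ∏ _j : Fin p, |x i0| :=
                Finset.prod_le_prod (fun j _ => abs_nonneg _)
                  (fun j _ => hmax (js j) (Finset.mem_univ _))
            _ = |x i0| ^ p := by rw [Finset.prod_const, Finset.card_univ, Fintype.card_fin]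
      _ = (∑ js, B i0 js) * |x i0| ^ p := by rw [Finset.sum_mul]
  have h2 : (∑ js, B i0 js) ≤ ∑ i, ∑ js, B i js :=
    Finset.single_le_sum (fun i _ => Finset.sum_nonneg fun js _ => hB i js) (Finset.mem_univ i0)
  have h3 := le_trans h1 (mul_le_mul_of_nonneg_right h2 (by positivity))
  exact le_of_mul_le_mul_right h3 (by positivity)

lemma exists_supersolution (hp : p ≠ 0) (hn : 0 < n) {B : Fin n → (Fin p → Fin n) → ℝ}
    (hB : ∀ i js, 0 ≤ B i js) {s : ℝ} (hs : tensorSpecRad p n B < s) :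
    ∃ v : Fin n → ℝ, (∀ i, 0 < v i) ∧ ∀ i, tapp p n B v i < s * v i ^ p := by
  classical
  by_contra hcon
  push_neg at hcon
  -- hcon : ∀ v, (∀ i, 0 < v i) → ∃ i, s * v i ^ p ≤ tapp p n B v i
  have H : ∀ k : ℕ, ∃ lam : ℝ, ∃ y : Fin n → ℝ, 0 < lam ∧ (∀ i, 0 < y i) ∧ (∑ i, y i = 1) ∧
      (∀ i, tapp p n (fun i js => B i js + 1/(k+1)) y i = lam * y i ^ p) :=
    fun k => perron hp hn (fun i js => by have := hB i js; positivity)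
  choose lamf yf hlamf hyfpos hyfsum heigf using H
  have htappmono : ∀ (k : ℕ) (x : Fin n → ℝ), (∀ i, 0 ≤ x i) → ∀ i,
      tapp p n B x i ≤ tapp p n (fun i js => B i js + 1/(k+1)) x i := by
    intro k x hx i
    refine Finset.sum_le_sum fun js _ => ?_
    refine mul_le_mul_of_nonneg_right (le_add_of_nonneg_right (by positivity)) ?_
    exact Finset.prod_nonneg fun j _ => hx (js j)
  have hsge : ∀ k, s ≤ lamf k := by
    intro k
    obtain ⟨i, hi⟩ := hcon (yf k) (hyfpos k)
    have h1 : s * yf k i ^ p ≤ lamf k * yf k i ^ p := by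
      calc s * yf k i ^ p ≤ tapp p n B (yf k) i := hi
        _ ≤ tapp p n (fun i js => B i js + 1/(k+1)) (yf k) i :=
            htappmono k (yf k) (fun j => (hyfpos k j).le) i
        _ = lamf k * yf k i ^ p := heigf k i
    exact le_of_mul_le_mul_right h1 (pow_pos (hyfpos k i) p)
  set R' : ℝ := ∑ i : Fin n, ∑ js : Fin p → Fin n, (B i js + 1) with hR'
  have hbound : ∀ k, lamf k ≤ R' := by
    intro k
    have h1 : lamf k ≤ ∑ i, ∑ js, (B i js + 1/(k+1)) :=
      subeigen_bound hn (fun i js => by have := hB i js; positivity) (fun i => (hyfpos k i).le) (hyfsum k)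
        (fun i => (heigf k i).ge)
    refine le_trans h1 (Finset.sum_le_sum fun i _ => Finset.sum_le_sum fun js _ => ?_)
    have : 1/((k:ℝ)+1) ≤ 1 := by
      rw [div_le_one (by positivity)]
      linarith [Nat.cast_nonneg (α := ℝ) k]
    linarith
  -- compactness
  set S : Set (ℝ × (Fin n → ℝ)) :=
    (Set.Icc s R') ×ˢ (Set.pi Set.univ fun _ : Fin n => Set.Icc (0:ℝ) 1) with hS
  have hScpt : IsCompact S :=
    (isCompact_Icc).prod (isCompact_univ_pi fun _ => isCompact_Icc)
  have hmemS : ∀ k, (lamf k, yf k) ∈ S := by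
    intro k
    refine ⟨⟨hsge k, hbound k⟩, fun i _ => ⟨(hyfpos k i).le, ?_⟩⟩
    calc yf k i ≤ ∑ j, yf k j :=
          Finset.single_le_sum (fun j _ => (hyfpos k j).le) (Finset.mem_univ i)
      _ = 1 := hyfsum k
  obtain ⟨⟨lam, y⟩, hmemlim, φ, hφ, htends⟩ := hScpt.tendsto_subseq hmemS
  have hlamtend : Tendsto (fun k => lamf (φ k)) atTop (nhds lam) :=
    (continuous_fst.tendsto _).comp htends
  have hytend : Tendsto (fun k => yf (φ k)) atTop (nhds y) :=
    (continuous_snd.tendsto _).comp htends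
  have hytendi : ∀ i, Tendsto (fun k => yf (φ k) i) atTop (nhds (y i)) :=
    fun i => ((continuous_apply i).tendsto _).comp hytend
  have hysum : ∑ i, y i = 1 := by
    have h1 : Tendsto (fun k => ∑ i, yf (φ k) i) atTop (nhds (∑ i, y i)) :=
      tendsto_finset_sum _ fun i _ => hytendi i
    have h2 : Tendsto (fun k => ∑ i, yf (φ k) i) atTop (nhds 1) := by
      simp only [hyfsum]
      exact tendsto_const_nhds
    exact tendsto_nhds_unique h1 h2
  have hyne : y ≠ 0 := by
    intro h
    rw [h] at hysum
    simp at hysum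
  have hepstend : Tendsto (fun k : ℕ => 1/((φ k : ℝ)+1)) atTop (nhds 0) := by
    have h0 : Tendsto (fun k : ℕ => 1/((k : ℝ)+1)) atTop (nhds 0) :=
      tendsto_one_div_add_atTop_nhds_zero_nat
    exact h0.comp hφ.tendsto_atTop
  have heiglim : ∀ i, tapp p n B y i = lam * y i ^ p := by
    intro i
    have hsplit : ∀ (k : ℕ) (i : Fin n), tapp p n (fun i js => B i js + 1/((k:ℝ)+1)) (yf k) i
        = tapp p n B (yf k) i + 1/((k:ℝ)+1) := by
      intro k i
      unfold tapp
      simp only [add_mul]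
      rw [Finset.sum_add_distrib, ← Finset.mul_sum, sum_prod_eq, hyfsum k, one_pow, mul_one]
    have h1 : Tendsto (fun k => tapp p n B (yf (φ k)) i + 1/((φ k : ℝ)+1)) atTop
        (nhds (tapp p n B y i + 0)) :=
      Tendsto.add (((tapp_continuous B i).tendsto _).comp hytend) hepstend
    have h2 : Tendsto (fun k => lamf (φ k) * yf (φ k) i ^ p) atTop
        (nhds (lam * y i ^ p)) :=
      hlamtend.mul ((hytendi i).pow p)
    have h3 : (fun k => tapp p n B (yf (φ k)) i + 1/((φ k : ℝ)+1))
        = fun k => lamf (φ k) * yf (φ k) i ^ p := by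
      funext k
      rw [← hsplit (φ k) i, heigf (φ k) i]
    rw [h3] at h1
    rw [add_zero] at h1
    exact tendsto_nhds_unique h1 h2
  have hslam : s ≤ lam := hmemlim.1.1
  have hmemE : |lam| ∈ {r : ℝ | ∃ lam : ℝ, ∃ x : Fin n → ℝ, x ≠ 0 ∧
      (∀ i, tapp p n B x i = lam * x i ^ p) ∧ r = |lam|} := ⟨lam, y, hyne, heiglim, rfl⟩
  have hbdd : BddAbove {r : ℝ | ∃ lam : ℝ, ∃ x : Fin n → ℝ, x ≠ 0 ∧
      (∀ i, tapp p n B x i = lam * x i ^ p) ∧ r = |lam|} := by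
    refine ⟨∑ i, ∑ js, B i js, fun r hr => ?_⟩
    obtain ⟨lam', x, hx, heig', rfl⟩ := hr
    exact eigen_bound hB hx heig'
  have : s ≤ tensorSpecRad p n B :=
    le_trans (le_trans hslam (le_abs_self lam)) (le_csSup hbdd hmemE)
  linarith

lemma tapp_decomp {A B : Fin n → (Fin p → Fin n) → ℝ} {s : ℝ}
    (hAeq : ∀ i js, A i js = s * identT p n i js - B i js) (x : Fin n → ℝ) (i : Fin n) :
    tapp p n A x i = s * x i ^ p - tapp p n B x i := by
  unfold tapp
  simp only [hAeq, sub_mul, mul_assoc]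
  rw [Finset.sum_sub_distrib, ← Finset.mul_sum, identT_apply]

/-- a nonsingular M-tensor equation with `b ≥ 0` has a minimal
nonnegative solution. -/
theorem stmt2 (m n : ℕ) (hm : 2 ≤ m) (A : Fin n → (Fin (m-1) → Fin n) → ℝ)
    (hA : IsMTensor (m-1) n A) (b : Fin n → ℝ) (hb : 0 ≤ b) :
    ∃ xs : Fin n → ℝ, 0 ≤ xs ∧ tapp (m-1) n A xs = b ∧
      ∀ y : Fin n → ℝ, 0 ≤ y → tapp (m-1) n A y = b → xs ≤ y := by
  classical
  set p := m - 1 with hpdef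
  have hp : p ≠ 0 := by omega
  rcases Nat.eq_zero_or_pos n with hn | hn
  · subst hn
    refine ⟨0, le_refl _, funext fun i => i.elim0, fun y _ _ i => i.elim0⟩
  obtain ⟨s, B, hBnn, hsrad, hAeq⟩ := hA
  have hrad0 : 0 ≤ tensorSpecRad p n B := by
    apply Real.sSup_nonneg
    rintro r ⟨lam, x, -, -, rfl⟩
    exact abs_nonneg lam
  have hs : 0 < s := lt_of_le_of_lt hrad0 hsrad
  -- supersolution
  obtain ⟨v, hvpos, hvlt⟩ := exists_supersolution hp hn hBnn hsrad
  have hne : (Finset.univ : Finset (Fin n)).Nonempty := ⟨⟨0, hn⟩, Finset.mem_univ _⟩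
  set δ0 : ℝ := Finset.univ.inf' hne (fun i => s * v i ^ p - tapp p n B v i) with hδ0
  have hδ0pos : 0 < δ0 := (Finset.lt_inf'_iff hne).mpr fun i _ => sub_pos.mpr (hvlt i)
  set bmax : ℝ := Finset.univ.sup' hne b with hbmax
  have hbmax0 : 0 ≤ bmax :=
    le_trans (hb ⟨0, hn⟩) (Finset.le_sup' b (Finset.mem_univ _))
  set t : ℝ := (bmax / δ0 + 1) ^ (1/(p:ℝ)) with ht
  have htpos : 0 < t := Real.rpow_pos_of_pos (by positivity) _
  have htp : t ^ p = bmax / δ0 + 1 := rt_pow hp (by positivity)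
  set w : Fin n → ℝ := fun i => t * v i with hw
  have hwpos : ∀ i, 0 < w i := fun i => mul_pos htpos (hvpos i)
  have hwsuper : ∀ i, tapp p n B w i + b i ≤ s * w i ^ p := by
    intro i
    have h1 : tapp p n B w i = t ^ p * tapp p n B v i := tapp_smul B t v i
    have h2 : s * w i ^ p = t ^ p * (s * v i ^ p) := by
      simp only [hw]; rw [mul_pow]; ring
    have h3 : δ0 ≤ s * v i ^ p - tapp p n B v i := Finset.inf'_le _ (Finset.mem_univ i)
    have h4 : b i ≤ bmax := Finset.le_sup' b (Finset.mem_univ i)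
    have h5 : bmax ≤ t ^ p * δ0 := by
      rw [htp]
      have := hδ0pos
      field_simp
      nlinarith
    rw [h1, h2]
    nlinarith [pow_pos htpos p]
  -- iteration
  set F : (Fin n → ℝ) → (Fin n → ℝ) :=
    fun x i => ((tapp p n B x i + b i)/s) ^ (1/(p:ℝ)) with hF
  set x : ℕ → Fin n → ℝ := fun k => F^[k] 0 with hx
  have hsucc : ∀ k, x (k+1) = F (x k) := fun k => Function.iterate_succ_apply' F k 0
  have harg_nn : ∀ (z : Fin n → ℝ), (∀ i, 0 ≤ z i) → ∀ i, 0 ≤ (tapp p n B z i + b i)/s :=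
    fun z hz i => div_nonneg (add_nonneg (tapp_nonneg hBnn hz i) (hb i)) hs.le
  have hFnn : ∀ (z : Fin n → ℝ), (∀ i, 0 ≤ z i) → ∀ i, 0 ≤ F z i :=
    fun z hz i => rt_nonneg (harg_nn z hz i)
  have hFmono : ∀ (z z' : Fin n → ℝ), (∀ i, 0 ≤ z i) → (∀ i, z i ≤ z' i) →
      ∀ i, F z i ≤ F z' i := by
    intro z z' hz hzz' i
    refine rt_mono (harg_nn z hz i) ?_
    have hle : tapp p n B z i + b i ≤ tapp p n B z' i + b i := by
      have := tapp_mono hBnn hz hzz' i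
      linarith
    exact (div_le_div_iff_of_pos_right hs).mpr hle
  -- x k nonneg
  have hxnn : ∀ k i, 0 ≤ x k i := by
    intro k
    induction k with
    | zero => intro i; exact le_refl 0
    | succ k ih =>
      intro i
      rw [hsucc k]
      exact hFnn (x k) ih i
  -- x k ≤ w
  have hFw : ∀ i, F w i ≤ w i := by
    intro i
    have h1 : (tapp p n B w i + b i)/s ≤ w i ^ p := by
      rw [div_le_iff₀ hs]
      calc tapp p n B w i + b i ≤ s * w i ^ p := hwsuper i
        _ = w i ^ p * s := by ring
    calc F w i ≤ (w i ^ p) ^ (1/(p:ℝ)) := rt_mono (harg_nn w (fun j => (hwpos j).le) i) h1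
      _ = w i := pow_rt hp (hwpos i).le
  have hxw : ∀ k i, x k i ≤ w i := by
    intro k
    induction k with
    | zero => intro i; exact (hwpos i).le
    | succ k ih =>
      intro i
      rw [hsucc k]
      exact le_trans (hFmono (x k) w (hxnn k) ih i) (hFw i)
  -- monotone
  have hxmono : ∀ k i, x k i ≤ x (k+1) i := by
    intro k
    induction k with
    | zero => intro i; rw [hsucc 0]; exact hFnn _ (hxnn 0) i
    | succ k ih =>
      intro i
      calc x (k+1) i = F (x k) i := congrFun (hsucc k) i
        _ ≤ F (x (k+1)) i := hFmono (x k) (x (k+1)) (hxnn k) ih i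
        _ = x (k+1+1) i := (congrFun (hsucc (k+1)) i).symm
  have hmono : ∀ i, Monotone fun k => x k i := fun i =>
    monotone_nat_of_le_succ fun k => hxmono k i
  have hbdd : ∀ i, BddAbove (Set.range fun k => x k i) := by
    intro i
    refine ⟨w i, ?_⟩
    rintro r ⟨k, rfl⟩
    exact hxw k i
  set xs : Fin n → ℝ := fun i => ⨆ k, x k i with hxs
  have hxstend : ∀ i, Tendsto (fun k => x k i) atTop (nhds (xs i)) :=
    fun i => tendsto_atTop_ciSup (hmono i) (hbdd i)
  have hxsnn : ∀ i, 0 ≤ xs i := fun i => le_trans (le_refl 0) (le_ciSup (hbdd i) 0)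
  -- fixed point equation : s * xs i ^ p = tapp B xs i + b i
  have hfix : ∀ i, xs i ^ p = (tapp p n B xs i + b i)/s := by
    intro i
    have h1 : Tendsto (fun k => x (k+1) i ^ p) atTop (nhds (xs i ^ p)) :=
      (((hxstend i).comp (tendsto_add_atTop_nat 1)).pow p)
    have h2 : Tendsto (fun k => (tapp p n B (x k) i + b i)/s) atTop
        (nhds ((tapp p n B xs i + b i)/s)) := by
      have hxt : Tendsto (fun k => x k) atTop (nhds xs) :=
        tendsto_pi_nhds.mpr hxstend
      exact ((((tapp_continuous B i).tendsto xs).comp hxt).add tendsto_const_nhds).div_const s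
    have h3 : (fun k => x (k+1) i ^ p) = fun k => (tapp p n B (x k) i + b i)/s := by
      funext k
      rw [hsucc k]
      exact rt_pow hp (harg_nn (x k) (hxnn k) i)
    rw [h3] at h1
    exact tendsto_nhds_unique h1 h2
  refine ⟨xs, fun i => hxsnn i, funext fun i => ?_, ?_⟩
  · rw [tapp_decomp hAeq]
    have := hfix i
    rw [eq_div_iff hs.ne'] at this
    linarith
  · intro y hy hyeq
    have hyfix : ∀ i, y i ^ p = (tapp p n B y i + b i)/s := by
      intro i
      have h1 := congrFun hyeq i
      rw [tapp_decomp hAeq] at h1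
      rw [eq_div_iff hs.ne']
      linarith
    have hxky : ∀ k i, x k i ≤ y i := by
      intro k
      induction k with
      | zero => intro i; exact hy i
      | succ k ih =>
        intro i
        rw [hsucc k]
        calc F (x k) i ≤ F y i := hFmono (x k) y (hxnn k) ih i
          _ = (y i ^ p) ^ (1/(p:ℝ)) := by rw [hF]; rw [hyfix i]
          _ = y i := pow_rt hp (hy i)
    exact fun i => ciSup_le fun k => hxky k i


end
end

section
/- Let A be a Z-tensor and b ≥ 0 with S_g = {x ≥ 0 : A x^{m-1} ≥ b} nonempty, and let x_min(A,b) be the minimal nonnegative solution of A x^{m-1} = b. Suppose Ã is a Z-tensor with Ã ≥ A entrywise (diagonal entries increased and/or off-diagonal entries increased but remaining nonpositive) and 0 ≤ b̃ ≤ b. Then the equation Ã x^{m-1} = b̃ also has a minimal nonnegative solution x_min(Ã,b̃), and x_min(Ã,b̃) ≤ x_min(A,b). -/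
open Finset Filter

noncomputable section

lemma tapp_anti (p n : ℕ) (A : Fin n → (Fin p → Fin n) → ℝ)
    (hA : IsZTensor p n A) (u v : Fin n → ℝ) (hu : 0 ≤ u) (huv : u ≤ v)
    (i : Fin n) (hi : u i = v i) : tapp p n A v i ≤ tapp p n A u i := by
  apply Finset.sum_le_sum
  intro js _
  by_cases h : ∀ j, js j = i
  · have : ∀ j ∈ Finset.univ, v (js j) = u (js j) := fun j _ => by rw [h j, hi]
    rw [Finset.prod_congr rfl this]
  · push_neg at h
    exact mul_le_mul_of_nonpos_left
      (Finset.prod_le_prod (fun j _ => hu (js j)) (fun j _ => huv (js j))) (hA i js h)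

lemma tapp_cont (p n : ℕ) (A : Fin n → (Fin p → Fin n) → ℝ) (i : Fin n) :
    Continuous fun x => tapp p n A x i := by
  unfold tapp
  exact continuous_finset_sum _ fun js _ =>
    continuous_const.mul (continuous_finset_prod _ fun j _ => continuous_apply _)

/-- monotone dependence of the minimal nonnegative solution on the data:
increasing (entrywise) the Z-tensor and decreasing `b` (keeping it nonnegative)
preserves existence of the minimal nonnegative solution and decreases it. -/
theorem stmt4 (m n : ℕ) (hm : 2 ≤ m)
    (A At : Fin n → (Fin (m-1) → Fin n) → ℝ)
    (hA : IsZTensor (m-1) n A) (hAt : IsZTensor (m-1) n At)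
    (hAle : ∀ i js, A i js ≤ At i js)
    (b bt : Fin n → ℝ) (hb : 0 ≤ b) (hbt : 0 ≤ bt) (hble : bt ≤ b)
    (hne : ∃ x : Fin n → ℝ, 0 ≤ x ∧ b ≤ tapp (m-1) n A x)
    (xmin : Fin n → ℝ) (hxmin : 0 ≤ xmin ∧ tapp (m-1) n A xmin = b ∧
      ∀ y : Fin n → ℝ, 0 ≤ y → tapp (m-1) n A y = b → xmin ≤ y) :
    ∃ xmt : Fin n → ℝ, 0 ≤ xmt ∧ tapp (m-1) n At xmt = bt ∧
      (∀ y : Fin n → ℝ, 0 ≤ y → tapp (m-1) n At y = bt → xmt ≤ y) ∧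
      xmt ≤ xmin := by
  obtain ⟨hx0, hxeq, _⟩ := hxmin
  have hpne : Nonempty (Fin (m-1)) := ⟨⟨0, by omega⟩⟩
  set F : Set (Fin n → ℝ) :=
    Set.Icc 0 xmin ∩ ⋂ i, {x | bt i ≤ tapp (m-1) n At x i} with hFdef
  have hmemF : ∀ x, x ∈ F ↔ (0 ≤ x ∧ x ≤ xmin ∧ ∀ i, bt i ≤ tapp (m-1) n At x i) := by
    intro x
    simp [hFdef, Set.mem_Icc, Set.mem_iInter, and_assoc]
  -- xmin is feasible
  have hAtmono : ∀ x : Fin n → ℝ, 0 ≤ x → ∀ i, tapp (m-1) n A x i ≤ tapp (m-1) n At x i := by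
    intro x hx i
    apply Finset.sum_le_sum
    intro js _
    exact mul_le_mul_of_nonneg_right (hAle i js)
      (Finset.prod_nonneg fun j _ => hx (js j))
  have hxminF : xmin ∈ F := by
    rw [hmemF]
    refine ⟨hx0, le_refl _, fun i => le_trans (hble i) ?_⟩
    calc b i = tapp (m-1) n A xmin i := by rw [hxeq]
    _ ≤ tapp (m-1) n At xmin i := hAtmono xmin hx0 i
  have hFcompact : IsCompact F := by
    apply IsCompact.inter_right isCompact_Icc
    exact isClosed_iInter fun i => isClosed_le continuous_const (tapp_cont _ _ _ _)
  obtain ⟨z, hzF, hzmin⟩ := hFcompact.exists_isMinOn ⟨xmin, hxminF⟩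
    ((continuous_finset_sum Finset.univ fun i _ => continuous_apply i).continuousOn
      (s := F) (f := fun x => ∑ i, x i))
  rw [hmemF] at hzF
  obtain ⟨hz0, hzle, hzfeas⟩ := hzF
  -- z is the least element of F
  have hleast : ∀ x ∈ F, z ≤ x := by
    intro x hx
    rw [hmemF] at hx
    obtain ⟨hx0', hxle, hxfeas⟩ := hx
    set w : Fin n → ℝ := fun i => min (x i) (z i) with hw
    have hw0 : 0 ≤ w := fun i => le_min (hx0' i) (hz0 i)
    have hwz : w ≤ z := fun i => min_le_right _ _
    have hwx : w ≤ x := fun i => min_le_left _ _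
    have hwF : w ∈ F := by
      rw [hmemF]
      refine ⟨hw0, le_trans hwx hxle, fun i => ?_⟩
      rcases min_cases (x i) (z i) with ⟨h1, _⟩ | ⟨h1, _⟩
      · exact le_trans (hxfeas i) (tapp_anti _ _ _ hAt w x hw0 hwx i h1)
      · exact le_trans (hzfeas i) (tapp_anti _ _ _ hAt w z hw0 hwz i h1)
    have hsum : (∑ i, z i) ≤ ∑ i, w i := isMinOn_iff.mp hzmin w hwF
    have hsum' : (∑ i, w i) = ∑ i, z i :=
      le_antisymm (Finset.sum_le_sum fun i _ => hwz i) hsum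
    have heq : ∀ i ∈ Finset.univ, w i = z i :=
      (Finset.sum_eq_sum_iff_of_le fun i _ => hwz i).mp hsum'
    intro i
    calc z i = w i := (heq i (Finset.mem_univ i)).symm
    _ ≤ x i := hwx i
  -- z solves the equation exactly
  have hzeq : tapp (m-1) n At z = bt := by
    funext i
    refine le_antisymm ?_ (hzfeas i)
    by_contra hlt
    push_neg at hlt
    rcases eq_or_lt_of_le (hz0 i) with hzi0 | hzi0
    · -- z i = 0 : the i-th value is ≤ 0 ≤ bt i
      have h0 : tapp (m-1) n At z i ≤ tapp (m-1) n At (0 : Fin n → ℝ) i :=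
        tapp_anti _ _ _ hAt 0 z (le_refl _) hz0 i hzi0
      have h00 : tapp (m-1) n At (0 : Fin n → ℝ) i = 0 := by
        unfold tapp
        apply Finset.sum_eq_zero
        intro js _
        rw [Finset.prod_eq_zero (Finset.mem_univ (Classical.arbitrary (Fin (m-1)))) rfl,
          mul_zero]
      have : tapp (m-1) n At z i ≤ bt i := by
        rw [h00] at h0; exact le_trans h0 (hbt i)
      linarith
    · -- z i > 0 : decrease z i a bit, staying feasible
      have hgc : Continuous fun t : ℝ => tapp (m-1) n At (Function.update z i t) i := by
        apply (tapp_cont (m-1) n At i).comp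
        apply continuous_pi
        intro j
        by_cases hji : j = i
        · subst hji; simpa using continuous_id'
        · simp only [Function.update_apply, if_neg hji]; exact continuous_const
      have hopen : IsOpen {t : ℝ | bt i < tapp (m-1) n At (Function.update z i t) i} :=
        isOpen_lt continuous_const hgc
      have hmem : z i ∈ {t : ℝ | bt i < tapp (m-1) n At (Function.update z i t) i} := by
        simpa [Function.update_eq_self] using hlt
      obtain ⟨ε, hε, hball⟩ := Metric.isOpen_iff.mp hopen _ hmem
      set t : ℝ := max 0 (z i - ε/2) with ht
      have ht0 : 0 ≤ t := le_max_left _ _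
      have htlt : t < z i := max_lt hzi0 (by linarith)
      have htball : t ∈ Metric.ball (z i) ε := by
        rw [Metric.mem_ball, Real.dist_eq, abs_sub_lt_iff]
        constructor
        · linarith
        · have : z i - ε/2 ≤ t := le_max_right _ _
          linarith
      have hti : bt i < tapp (m-1) n At (Function.update z i t) i := hball htball
      set z' : Fin n → ℝ := Function.update z i t with hz'
      have hz'le : z' ≤ z := by
        intro j
        by_cases hji : j = i
        · subst hji; simp [hz', le_of_lt htlt]
        · simp [hz', Function.update_apply, if_neg hji]
      have hz'0 : 0 ≤ z' := by
        intro j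
        by_cases hji : j = i
        · subst hji; simpa [hz'] using ht0
        · simpa [hz', Function.update_apply, if_neg hji] using hz0 j
      have hz'F : z' ∈ F := by
        rw [hmemF]
        refine ⟨hz'0, le_trans hz'le hzle, fun j => ?_⟩
        by_cases hji : j = i
        · subst hji; exact le_of_lt hti
        · refine le_trans (hzfeas j) (tapp_anti _ _ _ hAt z' z hz'0 hz'le j ?_)
          simp [hz', Function.update_apply, if_neg hji]
      have := hleast z' hz'F i
      simp [hz'] at this
      linarith
  refine ⟨z, hz0, hzeq, ?_, hzle⟩
  intro y hy0 hyeq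
  set w : Fin n → ℝ := fun i => min (y i) (z i) with hw
  have hw0 : 0 ≤ w := fun i => le_min (hy0 i) (hz0 i)
  have hwz : w ≤ z := fun i => min_le_right _ _
  have hwy : w ≤ y := fun i => min_le_left _ _
  have hwF : w ∈ F := by
    rw [hmemF]
    refine ⟨hw0, le_trans hwz hzle, fun i => ?_⟩
    rcases min_cases (y i) (z i) with ⟨h1, _⟩ | ⟨h1, _⟩
    · refine le_trans (le_of_eq ?_) (tapp_anti _ _ _ hAt w y hw0 hwy i h1)
      rw [hyeq]
    · exact le_trans (hzfeas i) (tapp_anti _ _ _ hAt w z hw0 hwz i h1)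
  exact fun i => le_trans (hleast w hwF i) (hwy i)


end
end
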